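/- There exists a constant C > 0 such that ∫₀^{y₂} erfc(z₂/2)/(y₂ − z₂ + 1) dz₂ ≤ C·y₂/(y₂+1)² for all y₂ > 0. -/

import Mathlib

open MeasureTheory

/-- The complementary error function `erfc(s) = (2/√π) ∫_s^∞ e^{−t²} dt`. -/
noncomputable def erfc (s : ℝ) : ℝ :=
  (2 / Real.sqrt Real.pi) * ∫ t in Set.Ioi s, Real.exp (-t^2)

lemma gauss_integrableOn (s : ℝ) :
    IntegrableOn (fun t : ℝ => Real.exp (-t^2)) (Set.Ioi s) := by
  have := integrable_exp_neg_mul_sq (b := 1) one_pos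
  simpa using this.integrableOn

lemma erfc_nonneg (s : ℝ) : 0 ≤ erfc s := by
  apply mul_nonneg (by positivity)
  exact setIntegral_nonneg measurableSet_Ioi fun t _ => (Real.exp_pos _).le

lemma erfc_antitone : Antitone erfc := by
  intro s s' h
  apply mul_le_mul_of_nonneg_left _ (by positivity)
  apply setIntegral_mono_set (gauss_integrableOn s)
  · exact Filter.Eventually.of_forall fun t => (Real.exp_pos _).le
  · exact Filter.Eventually.of_forall fun t ht => lt_of_le_of_lt h ht

lemma erfc_le (s : ℝ) : erfc s ≤ 6 * Real.exp (-s) := by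
  have h1 : (∫ t in Set.Ioi s, Real.exp (-t^2)) ≤ ∫ t in Set.Ioi s, Real.exp 1 * Real.exp (-t) := by
    apply setIntegral_mono_on (gauss_integrableOn s) _ measurableSet_Ioi
    · intro t _
      rw [← Real.exp_add]
      apply Real.exp_le_exp.2
      nlinarith [sq_nonneg (t - 1)]
    · have := (exp_neg_integrableOn_Ioi s (b := 1) one_pos).const_mul (Real.exp 1)
      simpa [IntegrableOn] using this
  have h2 : (∫ t in Set.Ioi s, Real.exp 1 * Real.exp (-t)) = Real.exp 1 * Real.exp (-s) := by
    rw [MeasureTheory.integral_const_mul, integral_exp_neg_Ioi]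
  have hpi : 1 ≤ Real.sqrt Real.pi := by
    rw [show (1:ℝ) = Real.sqrt 1 by simp]
    exact Real.sqrt_le_sqrt (by linarith [Real.pi_gt_three])
  have he : Real.exp 1 < 2.7182818286 := Real.exp_one_lt_d9
  have hs : 2 / Real.sqrt Real.pi ≤ 2 := by
    rw [div_le_iff₀ (by linarith)]; nlinarith
  have hI : (∫ t in Set.Ioi s, Real.exp (-t^2)) ≤ Real.exp 1 * Real.exp (-s) := h2 ▸ h1
  have hInn : 0 ≤ (∫ t in Set.Ioi s, Real.exp (-t^2)) :=
    setIntegral_nonneg measurableSet_Ioi fun t _ => (Real.exp_pos _).le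
  unfold erfc
  have hexp := (Real.exp_pos (-s)).le
  calc (2 / Real.sqrt Real.pi) * (∫ t in Set.Ioi s, Real.exp (-t^2))
      ≤ 2 * (Real.exp 1 * Real.exp (-s)) := by
        apply mul_le_mul hs hI hInn (by norm_num)
    _ ≤ 6 * Real.exp (-s) := by nlinarith

/-- There is `C > 0` such that
`∫₀^{y₂} erfc(z₂/2)/(y₂ − z₂ + 1) dz₂ ≤ C y₂/(y₂+1)²` for all `y₂ > 0`. -/
theorem erfc_integral_bound :
    ∃ C > 0, ∀ y₂ : ℝ, 0 < y₂ →
      (∫ z₂ in (0:ℝ)..y₂, erfc (z₂ / 2) / (y₂ - z₂ + 1))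
        ≤ C * y₂ / (y₂ + 1)^2 := by
  refine ⟨72, by norm_num, fun y hy => ?_⟩
  have hy1 : (0:ℝ) < y + 1 := by linarith
  set f : ℝ → ℝ := fun z => erfc (z / 2) / (y - z + 1) with hfdef
  have hmeas : Measurable f := by
    apply Measurable.div
    · exact erfc_antitone.measurable.comp (measurable_id.div_const 2)
    · fun_prop
  have hf_nonneg : ∀ z ∈ Set.Icc (0:ℝ) y, 0 ≤ f z := fun z hz =>
    div_nonneg (erfc_nonneg _) (by linarith [hz.2])
  have hf_le6 : ∀ z ∈ Set.Icc (0:ℝ) y, f z ≤ 6 := by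
    intro z hz
    have h1 : erfc (z / 2) ≤ 6 := by
      have := erfc_le (z / 2)
      have h2 : Real.exp (-(z / 2)) ≤ 1 := Real.exp_le_one_iff.2 (by linarith [hz.1])
      nlinarith
    calc f z ≤ erfc (z / 2) := div_le_self (erfc_nonneg _) (by linarith [hz.2])
      _ ≤ 6 := h1
  have hint : IntervalIntegrable f volume 0 y := by
    rw [intervalIntegrable_iff_integrableOn_Icc_of_le hy.le]
    apply Integrable.mono' (integrable_const (6:ℝ)) (hmeas.aestronglyMeasurable.restrict)
    filter_upwards [ae_restrict_mem measurableSet_Icc] with z hz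
    rw [Real.norm_eq_abs, abs_of_nonneg (hf_nonneg z hz)]
    exact hf_le6 z hz
  rcases le_or_gt y 1 with hc | hc
  · -- small y: I ≤ 6 y
    have h1 : (∫ z in (0:ℝ)..y, f z) ≤ ∫ z in (0:ℝ)..y, (6:ℝ) :=
      intervalIntegral.integral_mono_on hy.le hint intervalIntegrable_const hf_le6
    rw [intervalIntegral.integral_const, smul_eq_mul] at h1
    have hI0 : 0 ≤ (∫ z in (0:ℝ)..y, f z) := intervalIntegral.integral_nonneg hy.le hf_nonneg
    rw [div_eq_mul_inv, mul_comm (72 * y), ← inv_mul_le_iff₀ (by positivity)]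
    rw [inv_inv]
    have k1 : 0 ≤ (4 - (y+1)^2) * (∫ z in (0:ℝ)..y, f z) :=
      mul_nonneg (by nlinarith) hI0
    nlinarith [k1, h1, hI0]
  · -- large y: I ≤ 36 / (y + 1)
    set g : ℝ → ℝ := fun z => 6 * Real.exp (-(z / 2)) * (z + 1) / (y + 1) with hgdef
    have hg_int : IntervalIntegrable g volume 0 y := by
      apply Continuous.intervalIntegrable; fun_prop
    have hfg : ∀ z ∈ Set.Icc (0:ℝ) y, f z ≤ g z := by
      intro z hz
      have hden : (0:ℝ) < y - z + 1 := by linarith [hz.2]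
      simp only [hfdef, hgdef]
      rw [div_le_div_iff₀ hden hy1]
      have he := erfc_le (z / 2)
      have hE : erfc (z / 2) ≤ 6 * Real.exp (-(z / 2)) := he
      nlinarith [erfc_nonneg (z / 2), Real.exp_pos (-(z / 2)),
        mul_nonneg hz.1 (sub_nonneg.2 hz.2),
        mul_nonneg (erfc_nonneg (z / 2)) (mul_nonneg hz.1 (sub_nonneg.2 hz.2))]
    have h1 : (∫ z in (0:ℝ)..y, f z) ≤ ∫ z in (0:ℝ)..y, g z :=
      intervalIntegral.integral_mono_on hy.le hint hg_int hfg
    have hFTC : (∫ z in (0:ℝ)..y, 6 * Real.exp (-(z / 2)) * (z + 1))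
        = ((-12*y - 36) * Real.exp (-(y / 2))) - ((-12*0 - 36) * Real.exp (-(0 / 2))) := by
      apply intervalIntegral.integral_eq_sub_of_hasDerivAt
      · intro z _
        have hexp : HasDerivAt (fun z : ℝ => Real.exp (-(z / 2)))
            (Real.exp (-(z / 2)) * (-(1 / 2))) z := by
          have h := (((hasDerivAt_id z).div_const 2).neg).exp
          simpa using h
        have hlin : HasDerivAt (fun z : ℝ => -12 * z - 36) (-12) z := by
          simpa using ((hasDerivAt_id z).const_mul (-12)).sub_const 36
        have := (hlin.mul hexp : HasDerivAt (fun z : ℝ => (-12 * z - 36) * Real.exp (-(z / 2))) _ z)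
        refine this.congr_deriv ?_
        ring
      · apply Continuous.intervalIntegrable; fun_prop
    have hg_val : (∫ z in (0:ℝ)..y, g z) ≤ 36 / (y + 1) := by
      have : (∫ z in (0:ℝ)..y, g z)
          = (∫ z in (0:ℝ)..y, 6 * Real.exp (-(z / 2)) * (z + 1)) / (y + 1) := by
        simp only [hgdef]
        rw [intervalIntegral.integral_div]
      rw [this, hFTC]
      have hnum : (-12*y - 36) * Real.exp (-(y / 2)) - (-12*0 - 36) * Real.exp (-((0:ℝ) / 2)) ≤ 36 := by
        have h1 := Real.exp_pos (-(y/2))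
        norm_num
        nlinarith
      exact div_le_div_of_nonneg_right hnum hy1.le |>.trans_eq rfl
    have hfin : (∫ z in (0:ℝ)..y, f z) ≤ 36 / (y + 1) := h1.trans hg_val
    calc (∫ z in (0:ℝ)..y, f z) ≤ 36 / (y + 1) := hfin
      _ ≤ 72 * y / (y + 1)^2 := by
        rw [div_le_div_iff₀ hy1 (by positivity)]
        nlinarith
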